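/- arXiv:2509.10722 — 2 statements merged into one kernel-verified Lean document; each statement's English description precedes it below -/
import Mathlib

section
/- Let g : ℝᵏ → ℝ ∪ {+∞} be the indicator of the hyperplane H = {z : 𝟙ᵀz = 0}. In the ADMM z-update z⁺ = argmin_z (g(z) + (ρ/2)‖z - u - p‖²) with input u + p, if u is constant across the k coordinates, say u = ū·𝟙, then z⁺ = p - p̄·𝟙 where p̄ = (𝟙ᵀp)/k; moreover the subsequent dual update u⁺ = u + p - z⁺ = (ū + p̄)·𝟙 is again constant across coordinates. Hence by induction the scaled dual variables in PMP remain constant on each link for all iterations if initialized so. -/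
/-- ADMM z-update for the zero-sum hyperplane with a per-link-constant dual:
if `u = ū·𝟙`, the minimizer of `(ρ/2)‖z - u - p‖²` over `{z : 𝟙ᵀz = 0}` is
`z⁺ = p - p̄·𝟙`, and the dual update `u⁺ = u + p - z⁺ = (ū + p̄)·𝟙` is again
constant across coordinates. -/
theorem pmp_z_update_uniform_dual (ρ : ℝ) (hρ : 0 < ρ) (k : ℕ) (hk : 0 < k)
    (ubar : ℝ) (p : Fin k → ℝ) :
    let u : Fin k → ℝ := fun _ => ubar
    let pbar : ℝ := (∑ i, p i) / k
    let zp : Fin k → ℝ := fun i => p i - pbar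
    (∑ i, zp i = 0) ∧
    (∀ z : Fin k → ℝ, (∑ i, z i) = 0 → z ≠ zp →
      ρ / 2 * ∑ i, (zp i - u i - p i) ^ 2 < ρ / 2 * ∑ i, (z i - u i - p i) ^ 2) ∧
    ((fun i => u i + p i - zp i) = fun _ => ubar + pbar) := by
  intro u pbar zp
  have hk0 : (k : ℝ) ≠ 0 := Nat.cast_ne_zero.mpr hk.ne'
  have hsum : ∑ i, zp i = 0 := by
    simp only [zp, Finset.sum_sub_distrib, Finset.sum_const, Finset.card_univ,
      Fintype.card_fin, nsmul_eq_mul, pbar]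
    field_simp
    ring
  refine ⟨hsum, ?_, ?_⟩
  · intro z hz hne
    have key : ∀ i, (z i - u i - p i) ^ 2
        = (z i - zp i) ^ 2 + 2 * (-(pbar + ubar)) * (z i - zp i)
          + (zp i - u i - p i) ^ 2 := by
      intro i
      have : zp i - u i - p i = -(pbar + ubar) := by simp [zp, u]; ring
      rw [this]; ring
    have hsumz : ∑ i, (z i - u i - p i) ^ 2
        = ∑ i, (z i - zp i) ^ 2 + ∑ i, (zp i - u i - p i) ^ 2 := by
      simp only [key, Finset.sum_add_distrib, ← Finset.mul_sum,
        Finset.sum_sub_distrib, hz, hsum]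
      ring
    have hpos : 0 < ∑ i, (z i - zp i) ^ 2 := by
      have hne' : ∃ i, z i ≠ zp i := by
        by_contra h
        push_neg at h
        exact hne (funext h)
      obtain ⟨i, hi⟩ := hne'
      have h1 : 0 < (z i - zp i) ^ 2 :=
        (pow_pos (abs_pos.mpr (sub_ne_zero.mpr hi)) 2).trans_eq (sq_abs _)
      calc 0 < (z i - zp i) ^ 2 := h1
        _ ≤ ∑ j, (z j - zp j) ^ 2 :=
          Finset.single_le_sum (f := fun j => (z j - zp j) ^ 2)
            (fun j _ => sq_nonneg _) (Finset.mem_univ i)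
    have := hpos
    have h2 : ρ / 2 > 0 := by positivity
    rw [hsumz]
    nlinarith [h2, hpos]
  · funext i
    simp [u, zp]; ring
end

section
/- For the over-relaxed ADMM updates with relaxation parameter α, namely z⁺ = argmin_z (g(z) + (ρ/2)‖z - u - (α p⁺ + (1-α) z)‖²) where g is the indicator of the per-link zero-sum subspace and u is constant on each link, the updates simplify to z⁺_l = α(p⁺_l - p̄⁺_l·𝟙) + (1-α)·z_l and u⁺_l = u_l + α·p̄⁺_l·𝟙, provided z_l lies in the zero-sum subspace. -/
/-- Over-relaxed PMP updates on one link with `k` terminals: if the scaled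
price is uniform, `u = ū·𝟙`, and `z` lies in the zero-sum subspace, then any
minimizer `z⁺` of `(ρ/2)‖ζ - u - (α p⁺ + (1-α) z)‖²` over `{ζ : 𝟙ᵀζ = 0}`
equals `α(p⁺ - p̄⁺·𝟙) + (1-α)·z`, and the dual update
`u⁺ = u + (α p⁺ + (1-α) z) - z⁺` equals `u + α·p̄⁺·𝟙`. -/
theorem overrelaxed_pmp_updates (ρ α : ℝ) (hρ : 0 < ρ) (k : ℕ) (hk : 0 < k)
    (ubar : ℝ) (pplus z : Fin k → ℝ) (hz : ∑ i, z i = 0) :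
    let u : Fin k → ℝ := fun _ => ubar
    let pbar : ℝ := (∑ i, pplus i) / k
    let v : Fin k → ℝ := fun i => u i + (α * pplus i + (1 - α) * z i)
    ∀ zplus : Fin k → ℝ,
      ((∑ i, zplus i = 0) ∧ ∀ ζ : Fin k → ℝ, (∑ i, ζ i) = 0 →
        ρ / 2 * ∑ i, (zplus i - v i) ^ 2 ≤ ρ / 2 * ∑ i, (ζ i - v i) ^ 2) →
      (zplus = fun i => α * (pplus i - pbar) + (1 - α) * z i) ∧
      ((fun i => u i + (α * pplus i + (1 - α) * z i) - zplus i) =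
        fun i => u i + α * pbar) := by
  intro u pbar v zplus h
  obtain ⟨hsum, hmin⟩ := h
  have hkne : (k:ℝ) ≠ 0 := Nat.cast_ne_zero.mpr hk.ne'
  set w : Fin k → ℝ := fun i => α * (pplus i - pbar) + (1 - α) * z i with hw
  have hwsum : ∑ i, w i = 0 := by
    have : ∑ i, w i = α * (∑ i, pplus i - k * pbar) + (1 - α) * ∑ i, z i := by
      simp only [hw, Finset.mul_sum, Finset.sum_add_distrib, Finset.sum_sub_distrib,
        mul_sub, Finset.sum_const, Finset.card_univ, Fintype.card_fin, nsmul_eq_mul]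
      ring
    rw [this, hz, mul_zero, add_zero]
    have : (k:ℝ) * pbar = ∑ i, pplus i := by
      simp only [pbar]; field_simp
    rw [this]; ring
  set c : ℝ := ubar + α * pbar with hc
  have hvw : ∀ i, v i - w i = c := by
    intro i; simp only [v, w, u, c]; ring
  -- expansion identity
  have expand : ∀ ζ : Fin k → ℝ, (∑ i, ζ i) = 0 →
      ∑ i, (ζ i - v i) ^ 2 = (∑ i, (ζ i - w i) ^ 2) + k * c ^ 2 := by
    intro ζ hζ
    have : ∀ i, (ζ i - v i) ^ 2 = (ζ i - w i) ^ 2 - 2 * c * (ζ i - w i) + c ^ 2 := by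
      intro i
      have := hvw i
      have hv : v i = w i + c := by linarith
      rw [hv]; ring
    rw [Finset.sum_congr rfl fun i _ => this i]
    rw [Finset.sum_add_distrib, Finset.sum_sub_distrib, ← Finset.mul_sum,
      Finset.sum_sub_distrib, hζ, hwsum, Finset.sum_const, Finset.card_univ,
      Fintype.card_fin, nsmul_eq_mul]
    ring
  have key := hmin w hwsum
  rw [expand zplus hsum] at key
  have hww : ∑ i, (w i - w i) ^ 2 = 0 := by simp
  rw [expand w hwsum, hww] at key
  have hle : ∑ i, (zplus i - w i) ^ 2 ≤ 0 := by nlinarith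
  have hzero : ∀ i, (zplus i - w i) ^ 2 = 0 := by
    intro i
    have hnn : ∀ j ∈ Finset.univ, (0:ℝ) ≤ (zplus j - w j) ^ 2 := fun j _ => sq_nonneg _
    have := Finset.sum_nonneg hnn
    have hs0 : ∑ i, (zplus i - w i) ^ 2 = 0 := le_antisymm hle this
    exact (Finset.sum_eq_zero_iff_of_nonneg hnn).mp hs0 i (Finset.mem_univ i)
  have hzw : zplus = w := by
    funext i
    have := hzero i
    have := sq_eq_zero_iff.mp this
    linarith
  refine ⟨hzw, ?_⟩
  funext i
  rw [hzw]
  simp only [w, u]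
  ring
end
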